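/- There exists a constant C > 0 depending only on the weighted graph (V, ω, μ) and on the fixed function u₀ : V → ℝ such that for every u : V → ℝ with u' = u − ū not identically zero, ∫_V e^{u₀+u} dμ ≤ C · e^{ū} · e^{‖∇u'‖₂²}. -/

import Mathlib

open Real Finset

/-- The μ-Laplacian on a finite weighted graph. -/
noncomputable def graphLap {V : Type*} [Fintype V] (ω : V → V → ℝ) (μ : V → ℝ)
    (f : V → ℝ) (x : V) : ℝ :=
  (1 / μ x) * ∑ y, ω x y * (f y - f x)

/-- The integral of `f` over `V` with respect to the measure `μ`. -/
noncomputable def graphInt {V : Type*} [Fintype V] (μ : V → ℝ) (f : V → ℝ) : ℝ :=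
  ∑ x, μ x * f x

/-- The total volume `|V|` of the graph. -/
noncomputable def graphVol {V : Type*} [Fintype V] (μ : V → ℝ) : ℝ :=
  ∑ x, μ x

/-- The Dirac delta mass at vertex `p`. -/
noncomputable def diracDelta {V : Type*} [DecidableEq V] (μ : V → ℝ) (p x : V) : ℝ :=
  if x = p then 1 / μ p else 0

/-- `primFun F t = ∫_{√t}^{1} 2 s F(s²) ds`; this gives `g` from `G` and `h` from `H`. -/
noncomputable def primFun (F : ℝ → ℝ) (t : ℝ) : ℝ :=
  ∫ s in Real.sqrt t..(1 : ℝ), 2 * s * F (s ^ 2)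

/-- The pointwise squared gradient `|∇ f|²(x)`. -/
noncomputable def gradSq {V : Type*} [Fintype V] (ω : V → V → ℝ) (μ : V → ℝ)
    (f : V → ℝ) (x : V) : ℝ :=
  (1 / (2 * μ x)) * ∑ y, ω x y * (f y - f x) ^ 2

/-- The gradient norm `‖∇ f‖₂ = (∫_V |∇ f|² dμ)^{1/2}`. -/
noncomputable def gradNorm {V : Type*} [Fintype V] (ω : V → V → ℝ) (μ : V → ℝ)
    (f : V → ℝ) : ℝ :=
  Real.sqrt (graphInt μ (gradSq ω μ f))

/-- The mean value `f̄ = (1/|V|) ∫_V f dμ`. -/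
noncomputable def graphAvg {V : Type*} [Fintype V] (μ : V → ℝ) (f : V → ℝ) : ℝ :=
  (1 / graphVol μ) * graphInt μ f

/-- The `W^{1,2}(V)` norm, `(∫_V (|∇ f|² + f²) dμ)^{1/2}`. -/
noncomputable def sobolevNorm {V : Type*} [Fintype V] (ω : V → V → ℝ) (μ : V → ℝ)
    (f : V → ℝ) : ℝ :=
  Real.sqrt (graphInt μ (fun x => gradSq ω μ f x + f x ^ 2))

/-- `(u, v)` is a solution of the system `(S_λ)`. -/
def isSolution {V : Type*} [Fintype V] (ω : V → V → ℝ) (μ : V → ℝ)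
    (G H : ℝ → ℝ) (N1 N2 : ℕ) (u₀ v₀ : V → ℝ) (lam : ℝ) (u v : V → ℝ) : Prop :=
  ∀ x, graphLap ω μ u x =
      -lam * Real.exp (v₀ x + v x) * H (Real.exp (v₀ x + v x)) *
        primFun G (Real.exp (u₀ x + u x)) + 4 * Real.pi * N1 / graphVol μ ∧
    graphLap ω μ v x =
      -lam * Real.exp (u₀ x + u x) * G (Real.exp (u₀ x + u x)) *
        primFun H (Real.exp (v₀ x + v x)) + 4 * Real.pi * N2 / graphVol μ

/-- `(u, v)` is a lower solution of the system `(S_λ)`. -/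
def isLowerSolution {V : Type*} [Fintype V] (ω : V → V → ℝ) (μ : V → ℝ)
    (G H : ℝ → ℝ) (N1 N2 : ℕ) (u₀ v₀ : V → ℝ) (lam : ℝ) (u v : V → ℝ) : Prop :=
  ∀ x, graphLap ω μ u x ≥
      -lam * Real.exp (v₀ x + v x) * H (Real.exp (v₀ x + v x)) *
        primFun G (Real.exp (u₀ x + u x)) + 4 * Real.pi * N1 / graphVol μ ∧
    graphLap ω μ v x ≥
      -lam * Real.exp (u₀ x + u x) * G (Real.exp (u₀ x + u x)) *
        primFun H (Real.exp (v₀ x + v x)) + 4 * Real.pi * N2 / graphVol μ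

/-- `(uM, vM)` is a maximal solution of `(S_λ)`: it solves the system and any other
solution lies strictly below it. -/
def isMaximalSolution {V : Type*} [Fintype V] (ω : V → V → ℝ) (μ : V → ℝ)
    (G H : ℝ → ℝ) (N1 N2 : ℕ) (u₀ v₀ : V → ℝ) (lam : ℝ) (uM vM : V → ℝ) : Prop :=
  isSolution ω μ G H N1 N2 u₀ v₀ lam uM vM ∧
    ∀ u' v', isSolution ω μ G H N1 N2 u₀ v₀ lam u' v' → (u', v') ≠ (uM, vM) →
      ∀ x, u' x < uM x ∧ v' x < vM x

section MyAux

variable {V : Type*} [Fintype V]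

lemma my_gradSq_nonneg (ω : V → V → ℝ) (μ : V → ℝ) (hω : ∀ x y, 0 ≤ ω x y)
    (hμ : ∀ x, 0 < μ x) (f : V → ℝ) (x : V) : 0 ≤ gradSq ω μ f x := by
  unfold gradSq
  have := hμ x
  apply mul_nonneg (by positivity)
  exact Finset.sum_nonneg fun y _ => mul_nonneg (hω x y) (sq_nonneg _)

lemma my_energy_nonneg (ω : V → V → ℝ) (μ : V → ℝ) (hω : ∀ x y, 0 ≤ ω x y)
    (hμ : ∀ x, 0 < μ x) (f : V → ℝ) : 0 ≤ graphInt μ (gradSq ω μ f) := by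
  unfold graphInt
  exact Finset.sum_nonneg fun y _ =>
    mul_nonneg (hμ y).le (my_gradSq_nonneg ω μ hω hμ f y)

lemma my_edge_bound (ω : V → V → ℝ) (μ : V → ℝ) (hω : ∀ x y, 0 ≤ ω x y)
    (hμ : ∀ x, 0 < μ x) (f : V → ℝ) (a b : V) (hab : 0 < ω a b) :
    |f b - f a| ≤ Real.sqrt (2 / ω a b) * Real.sqrt (graphInt μ (gradSq ω μ f)) := by
  set E := graphInt μ (gradSq ω μ f) with hE
  have hEnn : 0 ≤ E := my_energy_nonneg ω μ hω hμ f
  have h1 : ω a b * (f b - f a) ^ 2 ≤ ∑ y, ω a y * (f y - f a) ^ 2 :=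
    Finset.single_le_sum (f := fun y => ω a y * (f y - f a) ^ 2)
      (fun y _ => mul_nonneg (hω a y) (sq_nonneg _)) (Finset.mem_univ b)
  have h2 : μ a * gradSq ω μ f a ≤ E := by
    rw [hE]; unfold graphInt
    exact Finset.single_le_sum
      (fun y _ => mul_nonneg (hμ y).le (my_gradSq_nonneg ω μ hω hμ f y)) (Finset.mem_univ a)
  have hma := hμ a
  have h3 : μ a * gradSq ω μ f a = (1 / 2) * ∑ y, ω a y * (f y - f a) ^ 2 := by
    unfold gradSq; field_simp
  have h4 : (f b - f a) ^ 2 ≤ (2 / ω a b) * E := by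
    rw [div_mul_eq_mul_div, le_div_iff₀ hab]
    nlinarith
  calc |f b - f a| = Real.sqrt ((f b - f a) ^ 2) := (Real.sqrt_sq_eq_abs _).symm
    _ ≤ Real.sqrt ((2 / ω a b) * E) := Real.sqrt_le_sqrt h4
    _ = Real.sqrt (2 / ω a b) * Real.sqrt E := Real.sqrt_mul (by positivity) _

lemma my_path_bound (ω : V → V → ℝ) (μ : V → ℝ) (hω : ∀ x y, 0 ≤ ω x y)
    (hμ : ∀ x, 0 < μ x) (f : V → ℝ) :
    ∀ (n : ℕ) (c : Fin (n + 1) → V),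
      (∀ i : Fin n, 0 < ω (c i.castSucc) (c i.succ)) →
      |f (c (Fin.last n)) - f (c 0)| ≤
        (∑ i : Fin n, Real.sqrt (2 / ω (c i.castSucc) (c i.succ))) *
          Real.sqrt (graphInt μ (gradSq ω μ f)) := by
  intro n
  induction n with
  | zero => intro c _; simp
  | succ n ih =>
    intro c hc
    have h1 := ih (fun i => c i.castSucc) (fun i => by
      have := hc i.castSucc
      simpa [Fin.succ_castSucc, -Fin.castSucc_succ] using this)
    have hedge : 0 < ω (c (Fin.last n).castSucc) (c (Fin.last (n + 1))) := by
      have := hc (Fin.last n)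
      simpa [Fin.succ_last] using this
    have h2 := my_edge_bound ω μ hω hμ f (c (Fin.last n).castSucc) (c (Fin.last (n + 1))) hedge
    have htri : |f (c (Fin.last (n + 1))) - f (c 0)| ≤
        |f (c (Fin.last (n + 1))) - f (c (Fin.last n).castSucc)| +
          |f (c (Fin.last n).castSucc) - f (c 0)| := abs_sub_le _ _ _
    rw [Fin.sum_univ_castSucc, add_mul]
    refine htri.trans ?_
    have e1 : (fun i : Fin n => Real.sqrt (2 / ω (c i.castSucc.castSucc) (c i.succ.castSucc)))
        = fun i : Fin n => Real.sqrt (2 / ω ((c ∘ Fin.castSucc) i.castSucc) ((c ∘ Fin.castSucc) i.succ)) := by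
      funext i; simp [Fin.succ_castSucc, -Fin.castSucc_succ]
    have h1' : |f (c (Fin.last n).castSucc) - f (c 0)| ≤
        (∑ i : Fin n, Real.sqrt (2 / ω (c i.castSucc.castSucc) (c (i.castSucc).succ))) *
          Real.sqrt (graphInt μ (gradSq ω μ f)) := by
      simpa [Fin.succ_castSucc, -Fin.castSucc_succ] using h1
    have h2' : |f (c (Fin.last (n + 1))) - f (c (Fin.last n).castSucc)| ≤
        Real.sqrt (2 / ω (c (Fin.last n).castSucc) (c ((Fin.last n).succ))) *
          Real.sqrt (graphInt μ (gradSq ω μ f)) := by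
      simpa [Fin.succ_last] using h2
    linarith [h1', h2']

end MyAux

theorem stmt_13
    {V : Type*} [Fintype V] [DecidableEq V]
    (hV : 1 < Fintype.card V)
    (ω : V → V → ℝ) (μ : V → ℝ)
    (hω_nonneg : ∀ x y, 0 ≤ ω x y)
    (hω_symm : ∀ x y, ω x y = ω y x)
    (hω_diag : ∀ x, ω x x = 0)
    (hconn : ∀ x y : V, x ≠ y → ∃ (n : ℕ) (c : Fin (n + 1) → V),
      c 0 = x ∧ c (Fin.last n) = y ∧ ∀ i : Fin n, 0 < ω (c i.castSucc) (c i.succ))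
    (hμ : ∀ x, 0 < μ x)
    (u₀ : V → ℝ) :
    ∃ C : ℝ, 0 < C ∧ ∀ u : V → ℝ, (∃ x, u x ≠ graphAvg μ u) →
      graphInt μ (fun x => Real.exp (u₀ x + u x)) ≤
        C * Real.exp (graphAvg μ u) *
          Real.exp (graphInt μ (gradSq ω μ (fun x => u x - graphAvg μ u))) := by
  classical
  haveI : Nonempty V := Fintype.card_pos_iff.mp (by omega)
  set E := fun f : V → ℝ => graphInt μ (gradSq ω μ f) with hEdef
  -- pairwise Poincaré constants
  have hpair : ∀ x y : V, ∃ K : ℝ, 0 ≤ K ∧ ∀ f : V → ℝ,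
      |f x - f y| ≤ K * Real.sqrt (E f) := by
    intro x y
    by_cases hxy : x = y
    · exact ⟨0, le_refl 0, fun f => by simp [hxy]⟩
    · obtain ⟨n, c, hc0, hcl, hpos⟩ := hconn y x (fun h => hxy h.symm)
      refine ⟨∑ i : Fin n, Real.sqrt (2 / ω (c i.castSucc) (c i.succ)),
        Finset.sum_nonneg fun i _ => Real.sqrt_nonneg _, fun f => ?_⟩
      have := my_path_bound ω μ hω_nonneg hμ f n c hpos
      rwa [hc0, hcl] at this
  choose K hK0 hKle using hpair
  set Kt : ℝ := ∑ x : V, ∑ y : V, K x y with hKt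
  have hKt0 : 0 ≤ Kt :=
    Finset.sum_nonneg fun x _ => Finset.sum_nonneg fun y _ => hK0 x y
  have hKxy : ∀ x y : V, K x y ≤ Kt := by
    intro x y
    calc K x y ≤ ∑ y : V, K x y :=
          Finset.single_le_sum (fun y _ => hK0 x y) (Finset.mem_univ y)
      _ ≤ Kt := Finset.single_le_sum
          (fun x _ => Finset.sum_nonneg fun y _ => hK0 x y) (Finset.mem_univ x)
  refine ⟨Real.exp (Kt ^ 2 / 4) * ∑ x, μ x * Real.exp (u₀ x), by
    have : (0 : ℝ) < ∑ x, μ x * Real.exp (u₀ x) := by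
      have hne : (Finset.univ : Finset V).Nonempty := Finset.univ_nonempty
      exact Finset.sum_pos (fun x _ => mul_pos (hμ x) (Real.exp_pos _)) hne
    positivity, ?_⟩
  intro u _
  set a := graphAvg μ u with ha
  set f : V → ℝ := fun x => u x - a with hf
  have hvolpos : 0 < graphVol μ := by
    unfold graphVol
    exact Finset.sum_pos (fun x _ => hμ x) Finset.univ_nonempty
  -- f has zero integral
  have hmean : graphInt μ f = 0 := by
    unfold graphInt
    have : ∑ x, μ x * f x = (∑ x, μ x * u x) - a * ∑ x, μ x := by
      rw [Finset.mul_sum, ← Finset.sum_sub_distrib]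
      congr 1; funext x; simp [hf]; ring
    rw [this]
    have : a * ∑ x, μ x = graphInt μ u := by
      rw [ha]
      unfold graphAvg graphVol graphInt
      have hne : (∑ x, μ x) ≠ 0 := by
        have : 0 < graphVol μ := hvolpos
        unfold graphVol at this; linarith
      field_simp
    rw [this]; unfold graphInt; ring
  -- some point where f ≤ 0
  obtain ⟨y0, hy0⟩ : ∃ y, f y ≤ 0 := by
    by_contra h
    push_neg at h
    have : 0 < graphInt μ f := by
      unfold graphInt
      exact Finset.sum_pos (fun x _ => mul_pos (hμ x) (h x)) Finset.univ_nonempty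
    linarith [hmean ▸ this]
  have hEnn : 0 ≤ E f := my_energy_nonneg ω μ hω_nonneg hμ f
  -- pointwise bound
  have hpt : ∀ x : V, f x ≤ Kt ^ 2 / 4 + E f := by
    intro x
    have h1 : f x ≤ |f x - f y0| := by
      have := abs_nonneg (f x - f y0)
      have h := le_abs_self (f x - f y0)
      linarith
    have h2 : |f x - f y0| ≤ Kt * Real.sqrt (E f) := by
      calc |f x - f y0| ≤ K x y0 * Real.sqrt (E f) := hKle x y0 f
        _ ≤ Kt * Real.sqrt (E f) :=
            mul_le_mul_of_nonneg_right (hKxy x y0) (Real.sqrt_nonneg _)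
    have h3 : Kt * Real.sqrt (E f) ≤ Kt ^ 2 / 4 + E f := by
      nlinarith [sq_nonneg (Real.sqrt (E f) - Kt / 2), Real.sq_sqrt hEnn]
    exact h1.trans (h2.trans h3)
  -- conclude
  unfold graphInt
  have hsum : ∀ x : V, μ x * Real.exp (u₀ x + u x) ≤
      (μ x * Real.exp (u₀ x)) * (Real.exp (Kt ^ 2 / 4) * Real.exp a * Real.exp (E f)) := by
    intro x
    have : u₀ x + u x = u₀ x + a + f x := by simp [hf]
    rw [this]
    have := Real.exp_le_exp.2 (hpt x)
    have hrw : Real.exp (u₀ x + a + f x) = Real.exp (u₀ x) * Real.exp a * Real.exp (f x) := by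
      rw [← Real.exp_add, ← Real.exp_add]
    rw [hrw]
    have hfle : Real.exp (f x) ≤ Real.exp (Kt ^ 2 / 4) * Real.exp (E f) := by
      rw [← Real.exp_add]
      exact Real.exp_le_exp.2 (hpt x)
    have h1 : 0 < μ x := hμ x
    have h2 : (0:ℝ) < Real.exp (u₀ x) * Real.exp a := by positivity
    calc μ x * (Real.exp (u₀ x) * Real.exp a * Real.exp (f x))
        ≤ μ x * (Real.exp (u₀ x) * Real.exp a * (Real.exp (Kt ^ 2 / 4) * Real.exp (E f))) := by
          apply mul_le_mul_of_nonneg_left _ h1.le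
          exact mul_le_mul_of_nonneg_left hfle h2.le
      _ = (μ x * Real.exp (u₀ x)) * (Real.exp (Kt ^ 2 / 4) * Real.exp a * Real.exp (E f)) := by
          ring
  calc ∑ x, μ x * Real.exp (u₀ x + u x)
      ≤ ∑ x, (μ x * Real.exp (u₀ x)) * (Real.exp (Kt ^ 2 / 4) * Real.exp a * Real.exp (E f)) :=
        Finset.sum_le_sum fun x _ => hsum x
    _ = Real.exp (Kt ^ 2 / 4) * (∑ x, μ x * Real.exp (u₀ x)) * Real.exp a *
        Real.exp (E f) := by rw [← Finset.sum_mul]; ring
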